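/- Fix Ī ∈ ℝ, δ_h, δ_n ∈ ℝ, T_h, T_n > 0, and t₀ ∈ ℝ. Let v, h, n : ℝ → ℝ be differentiable at t₀ with v(t₀) ∈ (Ē_K, Ē_Na), h'(t₀) = δ_h·H(v(t₀),h(t₀)), n'(t₀) = δ_n·N(v(t₀),n(t₀)), and suppose V(v(t), m_∞(v(t)), h(t), n(t)) = 0 for all t in a neighbourhood of t₀. Let D denote the derivative at v(t₀) of the map w ↦ V(w, m_∞(w), h(t₀), n(t₀)). Then D·v'(t₀) = (v(t₀) − Ē_Na)·m_∞(v(t₀))³·δ_h·H(v(t₀),h(t₀)) + 4·ḡ_K·(v(t₀) − Ē_K)·n(t₀)³·δ_n·N(v(t₀),n(t₀)). -/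

import Mathlib

open Real Set Filter

noncomputable section

/-- Nernst potential of sodium (rescaled). -/
def ENa : ℝ := 0.5
/-- Nernst potential of potassium (rescaled). -/
def EK : ℝ := -0.77
/-- Nernst potential of the leak current (rescaled). -/
def EL : ℝ := -0.544
/-- Rescaled potassium conductance. -/
def gK : ℝ := 0.3
/-- Rescaled leak conductance. -/
def gL : ℝ := 0.0025

/-- The right-hand side of the fast voltage equation. -/
def V (I v m h n : ℝ) : ℝ :=
  I - (v - ENa) * m ^ 3 * h - gK * (v - EK) * n ^ 4 - gL * (v - EL)

def αm (v : ℝ) : ℝ := ((v + 40) / 10) / (1 - Real.exp (-(v + 40) / 10))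
def βm (v : ℝ) : ℝ := 4 * Real.exp (-(v + 65) / 18)
def αh (v : ℝ) : ℝ := (7 / 100) * Real.exp (-(v + 65) / 20)
def βh (v : ℝ) : ℝ := 1 / (1 + Real.exp (-(v + 35) / 10))
def αn (v : ℝ) : ℝ := ((v + 55) / 100) / (1 - Real.exp (-(v + 55) / 10))
def βn (v : ℝ) : ℝ := (1 / 4) * Real.exp (-(v + 65) / 80)

def minf (v : ℝ) : ℝ := αm v / (αm v + βm v)
def hinf (v : ℝ) : ℝ := αh v / (αh v + βh v)
def ninf (v : ℝ) : ℝ := αn v / (αn v + βn v)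
def tmhat (v : ℝ) : ℝ := 1 / (αm v + βm v)
def thhat (v : ℝ) : ℝ := 1 / (αh v + βh v)
def tnhat (v : ℝ) : ℝ := 1 / (αn v + βn v)

/-- The real, sign-preserving cube root: `cbrt s = sign s * |s| ^ (1/3)`. -/
def cbrt (s : ℝ) : ℝ := Real.sign s * |s| ^ ((1 : ℝ) / 3)

/-- Graph representation `m = μ(v,h,n)` of the critical manifold. -/
def μfun (I v h n : ℝ) : ℝ :=
  cbrt ((I - gK * (v - EK) * n ^ 4 - gL * (v - EL)) / ((v - ENa) * h))

/-- Graph representation `h = η(v,n)` of the two-dimensional critical manifold. -/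
def ηfun (I v n : ℝ) : ℝ :=
  (I - gK * (v - EK) * n ^ 4 - gL * (v - EL)) / ((v - ENa) * (minf v) ^ 3)

/-- Graph representation `n = ν(v,h)` of the two-dimensional critical manifold
(nonnegative real fourth root). -/
def νfun (I v h : ℝ) : ℝ :=
  ((I - (v - ENa) * (minf v) ^ 3 * h - gL * (v - EL)) / (gK * (v - EK))) ^ ((1 : ℝ) / 4)

/-- `H(v,h) = (h_∞(v) - h)/(T_h · t̂_h(v))`. -/
def Hfun (Th v h : ℝ) : ℝ := (hinf v - h) / (Th * thhat v)

/-- `N(v,n) = (n_∞(v) - n)/(T_n · t̂_n(v))`. -/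
def Nfun (Tn v n : ℝ) : ℝ := (ninf v - n) / (Tn * tnhat v)

/-- implicit differentiation of the constraint
`V(v(t), m_∞(v(t)), h(t), n(t)) = 0` along the reduced flow on the critical manifold. -/
theorem stmt12 (I δh δn Th Tn t₀ : ℝ) (hTh : 0 < Th) (hTn : 0 < Tn)
    (fv fh fn : ℝ → ℝ)
    (hfv : DifferentiableAt ℝ fv t₀) (hfh : DifferentiableAt ℝ fh t₀)
    (hfn : DifferentiableAt ℝ fn t₀)
    (hv : fv t₀ ∈ Set.Ioo EK ENa)
    (hdh : deriv fh t₀ = δh * Hfun Th (fv t₀) (fh t₀))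
    (hdn : deriv fn t₀ = δn * Nfun Tn (fv t₀) (fn t₀))
    (hconstr : ∀ᶠ t in nhds t₀, V I (fv t) (minf (fv t)) (fh t) (fn t) = 0) :
    deriv (fun w => V I w (minf w) (fh t₀) (fn t₀)) (fv t₀) * deriv fv t₀ =
      (fv t₀ - ENa) * (minf (fv t₀)) ^ 3 * (δh * Hfun Th (fv t₀) (fh t₀)) +
        4 * gK * (fv t₀ - EK) * (fn t₀) ^ 3 * (δn * Nfun Tn (fv t₀) (fn t₀)) := by
  rw [← hdh, ← hdn]
  have hmdiff : DifferentiableAt ℝ minf (fv t₀) := by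
    obtain ⟨h1, h2⟩ := hv
    have hv40 : 0 < fv t₀ + 40 := by simp [EK] at h1; linarith
    have hden : 0 < 1 - Real.exp (-(fv t₀ + 40) / 10) := by
      have : Real.exp (-(fv t₀ + 40) / 10) < 1 := by
        rw [Real.exp_lt_one_iff]; linarith
      linarith
    have hαd : DifferentiableAt ℝ αm (fv t₀) := by
      apply DifferentiableAt.div
      · fun_prop
      · exact (differentiableAt_const 1).sub (DifferentiableAt.exp (by fun_prop))
      · exact ne_of_gt hden
    have hβd : DifferentiableAt ℝ βm (fv t₀) := by
      unfold βm; exact DifferentiableAt.const_mul (DifferentiableAt.exp (by fun_prop)) 4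
    have hαpos : 0 < αm (fv t₀) := div_pos (by linarith) hden
    have hβpos : 0 < βm (fv t₀) := by unfold βm; positivity
    exact DifferentiableAt.div hαd (hαd.add hβd) (by positivity)
  set v₀ := fv t₀ with hv₀
  set m' := deriv minf v₀ with hm'
  set v' := deriv fv t₀ with hv'
  set h' := deriv fh t₀ with hh'
  set n' := deriv fn t₀ with hn'
  have hm : HasDerivAt minf m' v₀ := hmdiff.hasDerivAt
  have hVd : HasDerivAt fv v' t₀ := hfv.hasDerivAt
  have hcomp : HasDerivAt (fun t => minf (fv t)) (m' * v') t₀ := hm.comp t₀ hVd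
  have hF : HasDerivAt (fun t => V I (fv t) (minf (fv t)) (fh t) (fn t))
      (0 - (((v' * minf v₀ ^ 3 + (v₀ - ENa) * (3 * minf v₀ ^ 2 * (m' * v'))) * fh t₀
        + (v₀ - ENa) * minf v₀ ^ 3 * h')
      + (gK * v' * fn t₀ ^ 4 + gK * (v₀ - EK) * (4 * fn t₀ ^ 3 * n'))
      + gL * v')) t₀ := by
    have h1 : HasDerivAt (fun t => fv t - ENa) v' t₀ := hVd.sub_const _
    have h2 : HasDerivAt (fun t => (minf (fv t)) ^ 3) (3 * minf v₀ ^ 2 * (m' * v')) t₀ := by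
      simpa using hcomp.fun_pow 3
    have h3 := (h1.fun_mul h2).fun_mul hfh.hasDerivAt
    have h4 : HasDerivAt (fun t => (fn t) ^ 4) (4 * fn t₀ ^ 3 * n') t₀ := by
      simpa using hfn.hasDerivAt.fun_pow 4
    have h5 := ((hVd.sub_const EK).const_mul gK).fun_mul h4
    have h6 := ((hVd.sub_const EL).const_mul gL)
    have := (((hasDerivAt_const t₀ I).fun_sub h3).fun_sub h5).fun_sub h6
    unfold V
    exact this.congr_deriv (by simp only [hv₀, hh']; ring)
  have hE : (0 - (((v' * minf v₀ ^ 3 + (v₀ - ENa) * (3 * minf v₀ ^ 2 * (m' * v'))) * fh t₀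
        + (v₀ - ENa) * minf v₀ ^ 3 * h')
      + (gK * v' * fn t₀ ^ 4 + gK * (v₀ - EK) * (4 * fn t₀ ^ 3 * n'))
      + gL * v')) = 0 := by
    rw [← hF.deriv]
    rw [Filter.EventuallyEq.deriv_eq hconstr]
    simp
  have hg : HasDerivAt (fun w => V I w (minf w) (fh t₀) (fn t₀))
      (0 - (((1 * minf v₀ ^ 3 + (v₀ - ENa) * (3 * minf v₀ ^ 2 * m')) * fh t₀)
      + gK * 1 * fn t₀ ^ 4 + gL * 1)) v₀ := by
    have h1 : HasDerivAt (fun w : ℝ => w - ENa) 1 v₀ := (hasDerivAt_id v₀).sub_const _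
    have h2 : HasDerivAt (fun w => (minf w) ^ 3) (3 * minf v₀ ^ 2 * m') v₀ := by
      simpa using hm.fun_pow 3
    have h3 := (h1.fun_mul h2).mul_const (fh t₀)
    have h4 := ((hasDerivAt_id v₀).sub_const EK).const_mul gK |>.mul_const (fn t₀ ^ 4)
    have h5 := ((hasDerivAt_id v₀).sub_const EL).const_mul gL
    have := (((hasDerivAt_const v₀ I).fun_sub h3).fun_sub h4).fun_sub h5
    unfold V
    exact this.congr_deriv (by ring)
  rw [hg.deriv]
  linear_combination hE
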